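/- Let F : X → ℝ₊ be a differentiable, monotone (x ≤ y implies F(x) ≤ F(y)), γ-weakly DR-submodular function on a box X ⊆ ℝ₊ⁿ. Then for any x, y ∈ X, F(y) - (1 + 1/γ²) F(x) ≤ (1/γ) ⟨∇F(x), y - x⟩. -/

import Mathlib

open RealInnerProductSpace

private lemma mvt_gradient {n : ℕ} {F : EuclideanSpace ℝ (Fin n) → ℝ}
    (hF : Differentiable ℝ F) (p v : EuclideanSpace ℝ (Fin n)) :
    ∃ c ∈ Set.Ioo (0:ℝ) 1, F (p + v) - F p = ⟪gradient F (p + c • v), v⟫ := by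
  have hline : ∀ t : ℝ, HasDerivAt (fun t : ℝ => F (p + t • v))
      ⟪gradient F (p + t • v), v⟫ t := by
    intro t
    have h1 : HasDerivAt (fun t : ℝ => p + t • v) v t := by
      simpa using ((hasDerivAt_id t).smul_const v).const_add p
    have h2 := ((hF (p + t • v)).hasGradientAt).hasFDerivAt
    have h3 := h2.comp_hasDerivAt t h1
    simpa [InnerProductSpace.toDual_apply_apply, Function.comp_def] using h3
  obtain ⟨c, hc, hceq⟩ := exists_hasDerivAt_eq_slope (fun t => F (p + t • v))
    (fun t => ⟪gradient F (p + t • v), v⟫) one_pos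
    (fun t _ => (hline t).continuousAt.continuousWithinAt)
    (fun t _ => hline t)
  refine ⟨c, hc, ?_⟩
  rw [hceq]
  simp [slope]

/-- Key lemma for weakly DR-submodular functions:
`F(y) - (1 + 1/γ²) F(x) ≤ (1/γ) ⟨∇F(x), y - x⟩`. -/
theorem weakly_drSubmodular_key_inequality
    {n : ℕ} (b : EuclideanSpace ℝ (Fin n)) (hb : ∀ i, 0 ≤ b i)
    (X : Set (EuclideanSpace ℝ (Fin n)))
    (hX : X = {y : EuclideanSpace ℝ (Fin n) | ∀ i, y i ∈ Set.Icc 0 (b i)})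
    (F : EuclideanSpace ℝ (Fin n) → ℝ) (γ : ℝ) (hγ : γ ∈ Set.Ioc (0 : ℝ) 1)
    (hF : Differentiable ℝ F)
    (hnonneg : ∀ x ∈ X, 0 ≤ F x)
    (hmono : ∀ x ∈ X, ∀ y ∈ X, (∀ i, x i ≤ y i) → F x ≤ F y)
    (hweakDR : ∀ x ∈ X, ∀ y ∈ X, (∀ i, x i ≤ y i) →
      ∀ i, γ * gradient F y i ≤ gradient F x i) :
    ∀ x ∈ X, ∀ y ∈ X,
      F y - (1 + 1 / γ ^ 2) * F x ≤ (1 / γ) * ⟪gradient F x, y - x⟫ := by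
  obtain ⟨hγ0, hγ1⟩ := hγ
  intro x hx y hy
  subst hX
  set z : EuclideanSpace ℝ (Fin n) := WithLp.toLp 2 (fun i => max (x i) (y i)) with hzdef
  set w : EuclideanSpace ℝ (Fin n) := WithLp.toLp 2 (fun i => min (x i) (y i)) with hwdef
  have hzX : ∀ i, z i ∈ Set.Icc 0 (b i) := fun i =>
    ⟨le_max_of_le_left (hx i).1, max_le (hx i).2 (hy i).2⟩
  have hwX : ∀ i, w i ∈ Set.Icc 0 (b i) := fun i =>
    ⟨le_min (hx i).1 (hy i).1, min_le_of_left_le (hx i).2⟩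
  have hxz : ∀ i, x i ≤ z i := fun i => le_max_left _ _
  have hyz : ∀ i, y i ≤ z i := fun i => le_max_right _ _
  have hwx : ∀ i, w i ≤ x i := fun i => min_le_left _ _
  -- F y ≤ F z
  have hFyz : F y ≤ F z := hmono y hy z hzX hyz
  -- First segment estimate: F z - F x ≤ (1/γ) ⟪∇F x, z - x⟫
  have hA : γ * (F z - F x) ≤ ⟪gradient F x, z - x⟫ := by
    obtain ⟨c, hc, heq⟩ := mvt_gradient hF x (z - x)
    rw [add_sub_cancel] at heq
    set q : EuclideanSpace ℝ (Fin n) := x + c • (z - x) with hq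
    have hqi : ∀ i, q i = x i + c * (z i - x i) := fun i => by
      simp [hq, PiLp.add_apply, PiLp.smul_apply, PiLp.sub_apply, smul_eq_mul]
    have hqX : ∀ i, q i ∈ Set.Icc 0 (b i) := by
      intro i
      have h1 : 0 ≤ c * (z i - x i) := mul_nonneg hc.1.le (by linarith [hxz i])
      have h2 : c * (z i - x i) ≤ z i - x i := by
        nlinarith [hxz i, hc.2]
      rw [hqi i]
      exact ⟨by linarith [(hx i).1], by linarith [(hzX i).2]⟩
    have hxq : ∀ i, x i ≤ q i := by
      intro i; rw [hqi i]
      nlinarith [hxz i, hc.1.le]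
    have hDR := hweakDR x hx q hqX hxq
    rw [heq]
    rw [PiLp.inner_apply, PiLp.inner_apply]
    rw [Finset.mul_sum]
    apply Finset.sum_le_sum
    intro i _
    have hv : 0 ≤ (z - x) i := by
      simp only [PiLp.sub_apply]; linarith [hxz i]
    have := hDR i
    simp only [RCLike.inner_apply, conj_trivial]
    nlinarith
  -- Second segment estimate: γ ⟪∇F x, x - w⟫ ≤ F x - F w
  have hB : γ * ⟪gradient F x, x - w⟫ ≤ F x - F w := by
    obtain ⟨c, hc, heq⟩ := mvt_gradient hF w (x - w)
    rw [add_sub_cancel] at heq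
    set q : EuclideanSpace ℝ (Fin n) := w + c • (x - w) with hq
    have hqi : ∀ i, q i = w i + c * (x i - w i) := fun i => by
      simp [hq, PiLp.add_apply, PiLp.smul_apply, PiLp.sub_apply, smul_eq_mul]
    have hqX : ∀ i, q i ∈ Set.Icc 0 (b i) := by
      intro i
      have h1 : 0 ≤ c * (x i - w i) := mul_nonneg hc.1.le (by linarith [hwx i])
      have h2 : c * (x i - w i) ≤ x i - w i := by
        nlinarith [hwx i, hc.2]
      rw [hqi i]
      exact ⟨by linarith [(hwX i).1], by linarith [(hx i).2]⟩
    have hqx : ∀ i, q i ≤ x i := by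
      intro i; rw [hqi i]
      nlinarith [hwx i, hc.2.le, hc.1.le]
    have hDR := hweakDR q hqX x hx hqx
    rw [heq]
    rw [PiLp.inner_apply, PiLp.inner_apply]
    rw [Finset.mul_sum]
    apply Finset.sum_le_sum
    intro i _
    have hv : 0 ≤ (x - w) i := by
      simp only [PiLp.sub_apply]; linarith [hwx i]
    have := hDR i
    simp only [RCLike.inner_apply, conj_trivial]
    nlinarith
  -- y - x = (z - x) - (x - w)
  have hsplit : y - x = (z - x) - (x - w) := by
    ext i
    simp only [PiLp.sub_apply, hzdef, hwdef, PiLp.toLp_apply]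
    have := max_add_min (x i) (y i)
    linarith
  have hinner : ⟪gradient F x, y - x⟫ =
      ⟪gradient F x, z - x⟫ - ⟪gradient F x, x - w⟫ := by
    rw [hsplit, inner_sub_right]
  have hFw : 0 ≤ F w := hnonneg w hwX
  rw [hinner]
  have hγ2 : (0:ℝ) < γ ^ 2 := by positivity
  rw [div_mul_eq_mul_div, le_div_iff₀ hγ0]
  have : γ ^ 2 * (F y - (1 + 1 / γ ^ 2) * F x) = γ ^ 2 * F y - γ ^ 2 * F x - F x := by
    field_simp; ring
  nlinarith [mul_le_mul_of_nonneg_left hA (le_of_lt hγ0),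
    mul_le_mul_of_nonneg_left hFyz (sq_nonneg γ)]
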